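/- For any prime p, positive integer a, and positive integer n with p not dividing n, the sum over k from 1 to p^a - 1 of B_k / (-n)^k is congruent to a·(-1)^(n-1)·D_{n-1} modulo p, where the sum is interpreted in Z_p (noting (-n)^k is invertible mod p). -/

import Mathlib

/-- Stirling numbers of the second kind. -/
def stirling2 : ℕ → ℕ → ℕ
  | 0, 0 => 1
  | 0, _ + 1 => 0
  | _ + 1, 0 => 0
  | n + 1, k + 1 => (k + 1) * stirling2 n (k + 1) + stirling2 n k

/-- The Bell numbers: the number of partitions of an `n`-element set. -/
def bell (n : ℕ) : ℕ := ∑ k ∈ Finset.range (n + 1), stirling2 n k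

open Finset Polynomial

lemma stirling2_of_lt : ∀ {n k : ℕ}, n < k → stirling2 n k = 0
  | 0, _ + 1, _ => rfl
  | n + 1, k + 1, h => by
    show (k + 1) * stirling2 n (k + 1) + stirling2 n k = 0
    rw [stirling2_of_lt (by omega : n < k + 1), stirling2_of_lt (by omega : n < k), mul_zero]

lemma pow_eq_sum_stirling2 {R : Type*} [CommRing R] (t : R) :
    ∀ k : ℕ, t ^ k = ∑ j ∈ range (k + 1), (stirling2 k j : R) * ∏ i ∈ range j, (t - (i : R))
  | 0 => by simp [stirling2]
  | k + 1 => by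
    have IH := pow_eq_sum_stirling2 t k
    have key : ∀ j : ℕ, t * ∏ i ∈ range j, (t - (i : R)) =
        (∏ i ∈ range (j+1), (t - (i : R))) + (j : R) * ∏ i ∈ range j, (t - (i : R)) := by
      intro j; rw [prod_range_succ]; ring
    have lhs : t ^ (k+1) = ∑ j ∈ range (k+1), ((stirling2 k j : R) * ∏ i ∈ range (j+1), (t - (i:R))
        + (j : R) * (stirling2 k j : R) * ∏ i ∈ range j, (t - (i:R))) := by
      rw [pow_succ, IH, sum_mul]
      refine sum_congr rfl fun j _ => ?_
      rw [mul_assoc, mul_comm (∏ i ∈ range j, (t - (i:R))) t, key j]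
      ring
    rw [lhs, sum_add_distrib]
    -- RHS manipulation
    rw [Finset.sum_range_succ' (fun j => (stirling2 (k+1) j : R) * ∏ i ∈ range j, (t - (i:R))) (k+1)]
    have h0 : (stirling2 (k+1) 0 : R) * ∏ i ∈ range 0, (t - (i:R)) = 0 := by
      show ((0:ℕ) : R) * _ = 0
      simp
    rw [h0, add_zero]
    have hterm : ∀ j, (stirling2 (k+1) (j+1) : R) * ∏ i ∈ range (j+1), (t - (i:R))
        = (stirling2 k j : R) * ∏ i ∈ range (j+1), (t - (i:R))
          + ((j+1 : ℕ) : R) * (stirling2 k (j+1) : R) * ∏ i ∈ range (j+1), (t - (i:R)) := by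
      intro j
      show ((( j + 1) * stirling2 k (j + 1) + stirling2 k j : ℕ) : R) * _ = _
      push_cast
      ring
    rw [Finset.sum_congr rfl (fun j _ => hterm j), sum_add_distrib]
    congr 1
    -- remains: ∑ j in range (k+1), (j:R) * S k j * P j = ∑ j in range (k+1), ((j+1:ℕ):R) * S k (j+1) * P (j+1)
    have := Finset.sum_range_succ' (fun j => ((j:ℕ) : R) * (stirling2 k j : R) * ∏ i ∈ range j, (t - (i:R))) (k+1)
    rw [Finset.sum_range_succ (fun j => ((j:ℕ) : R) * (stirling2 k j : R) * ∏ i ∈ range j, (t - (i:R))) (k+1)] at this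
    simp only [Nat.cast_zero, zero_mul] at this
    rw [stirling2_of_lt (by omega : k < k + 1)] at this
    push_cast at this
    simp only [mul_zero, zero_mul, add_zero, zero_add] at this
    rw [this]
    refine sum_congr rfl fun j _ => ?_
    push_cast
    ring
section ArtinSchreier
variable (p : ℕ) [hp : Fact p.Prime]

/-- The Artin–Schreier polynomial `X^p - X - 1` over `ZMod p`. -/
noncomputable def fAS : Polynomial (ZMod p) := X ^ p - X - 1

lemma fAS_eq : fAS p = X ^ p - (X + 1) := by rw [fAS]; ring

lemma fAS_monic : (fAS p).Monic := by
  have h2 : 2 ≤ p := hp.out.two_le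
  rw [fAS_eq]
  refine (monic_X_pow p).sub_of_left ?_
  rw [degree_X_pow]
  calc (X + 1 : Polynomial (ZMod p)).degree ≤ 1 := by
        simpa using degree_add_le X (1 : Polynomial (ZMod p))
    _ < (p : WithBot ℕ) := by exact_mod_cast h2.trans_lt' one_lt_two

lemma fAS_natDegree : (fAS p).natDegree = p := by
  have h2 : 2 ≤ p := hp.out.two_le
  rw [fAS_eq]
  rw [natDegree_sub_eq_left_of_natDegree_lt]
  · exact natDegree_X_pow p
  · rw [natDegree_X_pow]
    calc (X + 1 : Polynomial (ZMod p)).natDegree ≤ 1 := by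
          simpa using natDegree_add_le X (1 : Polynomial (ZMod p))
      _ < p := by omega

lemma fAS_degree_ne_zero : (fAS p).degree ≠ 0 := by
  have := fAS_natDegree p
  intro h
  have h2 : 2 ≤ p := hp.out.two_le
  have : (fAS p).natDegree = 0 := natDegree_eq_zero_iff_degree_le_zero.mpr (le_of_eq h)
  omega

instance : Nontrivial (AdjoinRoot (fAS p)) := AdjoinRoot.nontrivial _ (fAS_degree_ne_zero p)

instance : CharP (AdjoinRoot (fAS p)) p :=
  charP_of_injective_algebraMap (algebraMap (ZMod p) (AdjoinRoot (fAS p))).injective p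

/-- The canonical root. -/
noncomputable def θ : AdjoinRoot (fAS p) := AdjoinRoot.root (fAS p)

lemma theta_pow_p : θ p ^ p = θ p + 1 := by
  have h : AdjoinRoot.mk (fAS p) (fAS p) = 0 := AdjoinRoot.mk_self
  rw [fAS] at h
  simp only [map_sub, map_pow, AdjoinRoot.mk_X, map_one] at h
  have : (AdjoinRoot.root (fAS p)) ^ p - AdjoinRoot.root (fAS p) - 1 = 0 := h
  rw [θ]
  linear_combination this

/-- Falling-factorial-type products of `θ`. -/
noncomputable def ff (j : ℕ) : AdjoinRoot (fAS p) := ∏ i ∈ range j, (θ p - (i : AdjoinRoot (fAS p)))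

lemma ff_zero : ff p 0 = 1 := by simp [ff]

lemma ff_succ (j : ℕ) : ff p (j + 1) = ff p j * (θ p - (j : AdjoinRoot (fAS p))) := prod_range_succ _ _

lemma ff_p : ff p p = 1 := by
  haveI : NeZero p := ⟨hp.out.pos.ne'⟩
  have h2 : 2 ≤ p := hp.out.two_le
  have hq : Fintype.card (ZMod p) = p := ZMod.card p
  have hroots : (X ^ p - X : Polynomial (ZMod p)).roots = Finset.univ.val := by
    have := FiniteField.roots_X_pow_card_sub_X (ZMod p)
    rwa [hq] at this
  have hmonic : (X ^ p - X : Polynomial (ZMod p)).Monic := by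
    refine (monic_X_pow p).sub_of_left ?_
    rw [degree_X_pow, degree_X]
    exact_mod_cast h2.trans_lt' one_lt_two
  have hnd : (X ^ p - X : Polynomial (ZMod p)).natDegree = p := by
    rw [natDegree_sub_eq_left_of_natDegree_lt, natDegree_X_pow]
    rw [natDegree_X_pow, natDegree_X]; omega
  have hcard : Multiset.card (X ^ p - X : Polynomial (ZMod p)).roots
      = (X ^ p - X : Polynomial (ZMod p)).natDegree := by
    rw [hroots, hnd]; exact hq
  have hfact := prod_multiset_X_sub_C_of_monic_of_roots_card_eq hmonic hcard
  rw [hroots] at hfact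
  have h1 : aeval (θ p) (X ^ p - X : Polynomial (ZMod p)) = 1 := by
    simp only [map_sub, aeval_X, map_pow]
    rw [theta_pow_p]; ring
  have h2' : aeval (θ p) ((Finset.univ.val.map fun a : ZMod p => X - C a).prod) =
      ∏ a : ZMod p, (θ p - algebraMap (ZMod p) (AdjoinRoot (fAS p)) a) := by
    rw [map_multiset_prod, Multiset.map_map]
    refine congrArg Multiset.prod (Multiset.map_congr rfl fun a _ => ?_)
    simp
  have key : ∏ a : ZMod p, (θ p - algebraMap (ZMod p) (AdjoinRoot (fAS p)) a) = 1 := by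
    rw [← h2', hfact, h1]
  rw [ff, ← key]
  refine Finset.prod_nbij' (fun i => (i : ZMod p)) (fun a => a.val) ?_ ?_ ?_ ?_ ?_
  · intro i _; exact Finset.mem_univ _
  · intro a _; exact Finset.mem_range.mpr (ZMod.val_lt a)
  · intro i hi; exact ZMod.val_cast_of_lt (Finset.mem_range.mp hi)
  · intro a _; exact ZMod.natCast_zmod_val a
  · intro i _; rw [map_natCast]

end ArtinSchreier
section ArtinSchreier2
variable (p : ℕ) [hp : Fact p.Prime]

lemma theta_pow_eq_sum (k : ℕ) :
    θ p ^ k = ∑ j ∈ range (k + 1), (stirling2 k j : AdjoinRoot (fAS p)) * ff p j :=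
  pow_eq_sum_stirling2 (θ p) k

lemma ff_add_p (j : ℕ) : ff p (p + j) = ff p j := by
  rw [ff, prod_range_add]
  have h1 : ∏ i ∈ range p, (θ p - ((i : ℕ) : AdjoinRoot (fAS p))) = 1 := ff_p p
  rw [h1, one_mul]
  refine Finset.prod_congr rfl fun i _ => ?_
  have : ((p + i : ℕ) : AdjoinRoot (fAS p)) = (i : AdjoinRoot (fAS p)) := by
    push_cast
    rw [CharP.cast_eq_zero (AdjoinRoot (fAS p)) p, zero_add]
  rw [this]

lemma ff_mod (j : ℕ) : ff p j = ff p (j % p) := by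
  have key : ∀ q r, ff p (p * q + r) = ff p r := by
    intro q
    induction q with
    | zero => intro r; simp
    | succ q ih =>
      intro r
      have h : p * (q + 1) + r = p + (p * q + r) := by ring
      rw [h, ff_add_p, ih]
  conv_lhs => rw [← Nat.div_add_mod j p]
  exact key (j / p) (j % p)

/-- Power basis of the Artin–Schreier extension. -/
noncomputable def pbas : PowerBasis (ZMod p) (AdjoinRoot (fAS p)) :=
  AdjoinRoot.powerBasis' (fAS_monic p)

lemma pbas_dim : (pbas p).dim = p := fAS_natDegree p

lemma finrank_A : Module.finrank (ZMod p) (AdjoinRoot (fAS p)) = p := by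
  rw [PowerBasis.finrank (pbas p), pbas_dim]

lemma top_le_span : ⊤ ≤ Submodule.span (ZMod p) (Set.range fun j : Fin p => ff p j) := by
  rw [← (pbas p).basis.span_eq]
  refine Submodule.span_le.mpr ?_
  rintro _ ⟨i, rfl⟩
  rw [(pbas p).basis_eq_pow]
  have hgen : (pbas p).gen = θ p := rfl
  rw [hgen, theta_pow_eq_sum]
  refine Submodule.sum_mem _ fun j hj => ?_
  have hj' : j < p := by
    have h1 := Finset.mem_range.mp hj
    have h2 : (i : ℕ) < (pbas p).dim := i.isLt
    have h3 := pbas_dim p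
    omega
  have hsm : ((stirling2 (i : ℕ) j : ℕ) : AdjoinRoot (fAS p)) * ff p j
      = ((stirling2 (i : ℕ) j : ℕ) : ZMod p) • ff p j := by
    rw [Algebra.smul_def, map_natCast]
  rw [hsm]
  exact Submodule.smul_mem _ _ (Submodule.subset_span ⟨⟨j, hj'⟩, rfl⟩)

/-- Basis given by the falling factorials of `θ`. -/
noncomputable def bff : Module.Basis (Fin p) (ZMod p) (AdjoinRoot (fAS p)) :=
  basisOfTopLeSpanOfCardEqFinrank (fun j : Fin p => ff p j) (top_le_span p)
    (by rw [finrank_A p, Fintype.card_fin])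

/-- The linear functional taking value 1 on each `ff j`. -/
noncomputable def Lf : AdjoinRoot (fAS p) →ₗ[ZMod p] ZMod p := (bff p).sumCoords

lemma L_ff_fin (j : Fin p) : Lf p (ff p j) = 1 := by
  have h : ff p (j : ℕ) = bff p j := by
    rw [bff, coe_basisOfTopLeSpanOfCardEqFinrank]
  rw [h, Lf, Module.Basis.sumCoords_self_apply]

lemma L_ff (j : ℕ) : Lf p (ff p j) = 1 := by
  rw [ff_mod]
  exact L_ff_fin p ⟨j % p, Nat.mod_lt _ hp.out.pos⟩

lemma L_theta_pow (k : ℕ) : Lf p (θ p ^ k) = (bell k : ZMod p) := by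
  rw [theta_pow_eq_sum, map_sum]
  have hterm : ∀ j ∈ range (k + 1),
      Lf p ((stirling2 k j : AdjoinRoot (fAS p)) * ff p j) = (stirling2 k j : ZMod p) := by
    intro j _
    have hsm : ((stirling2 k j : ℕ) : AdjoinRoot (fAS p)) * ff p j
        = ((stirling2 k j : ℕ) : ZMod p) • ff p j := by
      rw [Algebra.smul_def, map_natCast]
    rw [hsm, map_smul, L_ff, smul_eq_mul, mul_one]
  rw [Finset.sum_congr rfl hterm, bell]
  push_cast
  rfl

end ArtinSchreier2
section MainComp
variable (p : ℕ) [hp : Fact p.Prime]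

/-- Coefficients of the inverse of `θ + n`. -/
noncomputable def cs (n m : ℕ) : ZMod p :=
  (-1) ^ m * ∏ t ∈ Icc 1 m, ((n : ZMod p) - (t : ZMod p))

lemma cs_zero (n : ℕ) : cs p n 0 = 1 := by simp [cs]

lemma cs_succ (n m : ℕ) :
    cs p n (m + 1) = -((n : ZMod p) - ((m + 1 : ℕ) : ZMod p)) * cs p n m := by
  rw [cs, cs, Finset.prod_Icc_succ_top (by omega : 1 ≤ m + 1)]
  push_cast
  ring

lemma cs_p (n : ℕ) (hpn : ¬ p ∣ n) : cs p n p = 0 := by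
  have h0 : n % p ≠ 0 := fun h => hpn (Nat.dvd_of_mod_eq_zero h)
  have hlt : n % p < p := Nat.mod_lt _ hp.out.pos
  have hmem : n % p ∈ Icc 1 p := Finset.mem_Icc.mpr ⟨by omega, by omega⟩
  rw [cs, Finset.prod_eq_zero hmem ?_, mul_zero]
  rw [ZMod.natCast_mod n p, sub_self]

/-- Explicit inverse of `θ + n`. -/
noncomputable def wAS (n : ℕ) : AdjoinRoot (fAS p) :=
  ∑ m ∈ range p, cs p n m • ff p (p - 1 - m)

lemma theta_mul_ff (n r : ℕ) :
    (θ p + (n : AdjoinRoot (fAS p))) * ff p r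
      = ff p (r + 1) + ((n : ZMod p) + (r : ZMod p)) • ff p r := by
  rw [ff_succ, Algebra.smul_def, map_add, map_natCast, map_natCast]
  ring

lemma theta_mul_w (n : ℕ) (hpn : ¬ p ∣ n) :
    (θ p + (n : AdjoinRoot (fAS p))) * wAS p n = 1 := by
  have hp2 := hp.out.two_le
  rw [wAS, Finset.mul_sum]
  have hterm : ∀ m ∈ range p,
      (θ p + (n : AdjoinRoot (fAS p))) * (cs p n m • ff p (p - 1 - m))
        = cs p n m • ff p (p - m) - cs p n (m + 1) • ff p (p - (m + 1)) := by
    intro m hm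
    have hmlt : m < p := Finset.mem_range.mp hm
    rw [mul_smul_comm, theta_mul_ff]
    have h1 : p - 1 - m + 1 = p - m := by omega
    have h2 : p - 1 - m = p - (m + 1) := by omega
    rw [h1, h2, smul_add, smul_smul]
    have hc : ((p - (m + 1) : ℕ) : ZMod p) = -(((m + 1 : ℕ)) : ZMod p) := by
      rw [Nat.cast_sub (by omega : m + 1 ≤ p), ZMod.natCast_self, zero_sub]
    have hcoef : cs p n m * ((n : ZMod p) + ((p - (m + 1) : ℕ) : ZMod p)) = -cs p n (m + 1) := by
      rw [hc, cs_succ]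
      ring
    rw [hcoef, neg_smul, sub_eq_add_neg]
  rw [Finset.sum_congr rfl hterm, Finset.sum_range_sub' (fun m => cs p n m • ff p (p - m))]
  rw [Nat.sub_self, ff_zero, cs_p p n hpn, cs_zero, Nat.sub_zero, ff_p, zero_smul, sub_zero,
    one_smul]

lemma L_w (n : ℕ) : Lf p (wAS p n) = ∑ m ∈ range p, cs p n m := by
  rw [wAS, map_sum]
  refine Finset.sum_congr rfl fun m _ => ?_
  rw [map_smul, L_ff, smul_eq_mul, mul_one]

lemma zmod_pow_pow (x : ZMod p) (a : ℕ) : x ^ (p ^ a) = x := by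
  induction a with
  | zero => rw [pow_zero, pow_one]
  | succ a ih => rw [pow_succ, pow_mul, ih, ZMod.pow_card]

lemma theta_pow_pow (a : ℕ) : θ p ^ (p ^ a) = θ p + ((a : ℕ) : AdjoinRoot (fAS p)) := by
  induction a with
  | zero => simp
  | succ a ih =>
    rw [pow_succ, pow_mul, ih, add_pow_char, theta_pow_p]
    have hca : ((a : ℕ) : AdjoinRoot (fAS p)) ^ p = ((a : ℕ) : AdjoinRoot (fAS p)) := by
      rw [← map_natCast (algebraMap (ZMod p) (AdjoinRoot (fAS p))) a, ← map_pow, ZMod.pow_card]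
    rw [hca]
    push_cast
    ring

lemma main_sum (a n : ℕ) (hpn : ¬ p ∣ n) :
    ∑ k ∈ Icc 1 (p ^ a - 1), (bell k : ZMod p) * ((-(n : ZMod p))⁻¹) ^ k
      = (a : ZMod p) * ∑ m ∈ range p, cs p n m := by
  set x : ZMod p := (-(n : ZMod p))⁻¹ with hxdef
  set A := AdjoinRoot (fAS p)
  set s : A := algebraMap (ZMod p) A x * θ p with hsdef
  have hn0 : (n : ZMod p) ≠ 0 := by
    rw [Ne, ZMod.natCast_eq_zero_iff]; exact hpn
  have hxne : x ≠ 0 := inv_ne_zero (neg_ne_zero.mpr hn0)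
  have hxn : x * (n : ZMod p) = -1 := by
    rw [hxdef, inv_neg, neg_mul, inv_mul_cancel₀ hn0]
  have hP : 0 < p ^ a := pow_pos hp.out.pos a
  -- step 1: identify the sum with L applied to a geometric sum
  have hLs : ∀ k : ℕ, Lf p (s ^ k) = (bell k : ZMod p) * x ^ k := by
    intro k
    rw [hsdef, mul_pow, ← map_pow, ← Algebra.smul_def, map_smul, L_theta_pow, smul_eq_mul,
      mul_comm]
  have hstep1 : ∑ k ∈ Icc 1 (p ^ a - 1), (bell k : ZMod p) * x ^ k
      = Lf p (∑ k ∈ Icc 1 (p ^ a - 1), s ^ k) := by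
    rw [map_sum]
    exact (Finset.sum_congr rfl fun k _ => (hLs k).symm)
  -- step 2: geometric sum identity
  have hsplit : range (p ^ a) = insert 0 (Icc 1 (p ^ a - 1)) := by
    ext k
    simp only [Finset.mem_range, Finset.mem_insert, Finset.mem_Icc]
    omega
  have hgeom := geom_sum_mul s (p ^ a)
  rw [hsplit, Finset.sum_insert (by simp)] at hgeom
  have hE1 : (∑ k ∈ Icc 1 (p ^ a - 1), s ^ k) * (s - 1) = s ^ (p ^ a) - s := by
    rw [pow_zero] at hgeom
    linear_combination hgeom
  have hsP : s ^ (p ^ a) = algebraMap (ZMod p) A x * (θ p + ((a : ℕ) : A)) := by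
    rw [hsdef, mul_pow, ← map_pow, zmod_pow_pow, theta_pow_pow]
  have hs1 : s - 1 = algebraMap (ZMod p) A x * (θ p + ((n : ℕ) : A)) := by
    have : algebraMap (ZMod p) A x * ((n : ℕ) : A) = -1 := by
      rw [← map_natCast (algebraMap (ZMod p) A) n, ← map_mul, hxn, map_neg, map_one]
    rw [mul_add, this, hsdef]
    ring
  have hE2 : (∑ k ∈ Icc 1 (p ^ a - 1), s ^ k) * (algebraMap (ZMod p) A x * (θ p + ((n : ℕ) : A)))
      = algebraMap (ZMod p) A x * (θ p + ((a : ℕ) : A)) - s := by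
    rw [← hs1, ← hsP, hE1]
  have hw := theta_mul_w p n hpn
  have hxinv : algebraMap (ZMod p) A x⁻¹ * algebraMap (ZMod p) A x = 1 := by
    rw [← map_mul, inv_mul_cancel₀ hxne, map_one]
  have hone : (algebraMap (ZMod p) A x * (θ p + ((n : ℕ) : A)))
      * (algebraMap (ZMod p) A x⁻¹ * wAS p n) = 1 := by
    linear_combination (algebraMap (ZMod p) A x * algebraMap (ZMod p) A x⁻¹) * hw + hxinv
  have hfin : (∑ k ∈ Icc 1 (p ^ a - 1), s ^ k) = ((a : ℕ) : A) * wAS p n := by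
    calc (∑ k ∈ Icc 1 (p ^ a - 1), s ^ k)
        = (∑ k ∈ Icc 1 (p ^ a - 1), s ^ k)
          * ((algebraMap (ZMod p) A x * (θ p + ((n : ℕ) : A)))
            * (algebraMap (ZMod p) A x⁻¹ * wAS p n)) := by rw [hone, mul_one]
      _ = ((∑ k ∈ Icc 1 (p ^ a - 1), s ^ k) * (algebraMap (ZMod p) A x * (θ p + ((n : ℕ) : A))))
            * (algebraMap (ZMod p) A x⁻¹ * wAS p n) := by ring
      _ = (algebraMap (ZMod p) A x * (θ p + ((a : ℕ) : A)) - s)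
            * (algebraMap (ZMod p) A x⁻¹ * wAS p n) := by rw [hE2]
      _ = ((a : ℕ) : A) * wAS p n * (algebraMap (ZMod p) A x⁻¹ * algebraMap (ZMod p) A x)
            + (algebraMap (ZMod p) A x * θ p - s)
              * (algebraMap (ZMod p) A x⁻¹ * wAS p n) := by ring
      _ = ((a : ℕ) : A) * wAS p n := by
            rw [hxinv, ← hsdef, sub_self, zero_mul, add_zero, mul_one]
  rw [hstep1, hfin]
  have : ((a : ℕ) : A) * wAS p n = ((a : ℕ) : ZMod p) • wAS p n := by
    rw [Algebra.smul_def, map_natCast]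
  rw [this, map_smul, L_w, smul_eq_mul]

end MainComp
lemma der_int : ∀ M : ℕ, ∑ m ∈ range (M + 1), ((-1 : ℤ)) ^ m * (M.descFactorial m : ℤ)
    = (-1) ^ M * (numDerangements M : ℤ)
  | 0 => by simp
  | M + 1 => by
    have IH := der_int M
    rw [Finset.sum_range_succ' (fun m => ((-1 : ℤ)) ^ m * ((M + 1).descFactorial m : ℤ)) (M + 1)]
    have hterm : ∀ m, ((-1 : ℤ)) ^ (m + 1) * (((M + 1).descFactorial (m + 1) : ℕ) : ℤ)
        = (-(M + 1 : ℤ)) * (((-1 : ℤ)) ^ m * (M.descFactorial m : ℤ)) := by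
      intro m
      rw [Nat.succ_descFactorial_succ]
      push_cast
      ring
    rw [Finset.sum_congr rfl fun m _ => hterm m, ← Finset.mul_sum, IH, numDerangements_succ,
      Nat.descFactorial_zero]
    have hsq : ((-1 : ℤ)) ^ M * (-1) ^ M = 1 := by
      rw [← pow_add]; exact Even.neg_one_pow ⟨M, rfl⟩
    push_cast
    rw [pow_succ]
    linear_combination -hsq

section Arith
variable (p : ℕ) [hp : Fact p.Prime]

lemma neg_one_pow_p : (-1 : ZMod p) ^ p = -1 := by
  rcases hp.out.eq_two_or_odd' with h2 | hodd
  · subst h2; rw [CharTwo.neg_eq, one_pow]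
  · exact hodd.neg_one_pow

lemma neg_one_pow_p_sub_one : (-1 : ZMod p) ^ (p - 1) = 1 := by
  rcases hp.out.eq_two_or_odd' with h2 | hodd
  · subst h2; rw [CharTwo.neg_eq, one_pow]
  · exact (Nat.Odd.sub_odd hodd odd_one).neg_one_pow

lemma der_add_p : ∀ m : ℕ,
    ((numDerangements (m + p) : ℤ) : ZMod p) = -((numDerangements m : ℤ) : ZMod p)
  | 0 => by
    have h2 := hp.out.two_le
    have h := numDerangements_succ (p - 1)
    have hc := congrArg (fun z : ℤ => (z : ZMod p)) h
    push_cast [Nat.cast_sub hp.out.one_le] at hc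
    rw [ZMod.natCast_self] at hc
    rw [show p - 1 + 1 = p by omega] at hc
    rw [zero_add]
    push_cast
    rw [hc, neg_one_pow_p_sub_one, numDerangements_zero]
    push_cast
    ring
  | m + 1 => by
    have IH := der_add_p m
    have h := numDerangements_succ (m + p)
    have h' := numDerangements_succ m
    have hc := congrArg (fun z : ℤ => (z : ZMod p)) h
    have hc' := congrArg (fun z : ℤ => (z : ZMod p)) h'
    push_cast at hc hc'
    rw [ZMod.natCast_self] at hc
    rw [show m + 1 + p = m + p + 1 by omega]
    push_cast at IH ⊢
    rw [hc, IH, pow_add, neg_one_pow_p p, hc']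
    ring

lemma E_period (m : ℕ) : ∀ s : ℕ,
    (-1 : ZMod p) ^ (m + p * s) * ((numDerangements (m + p * s) : ℤ) : ZMod p)
      = (-1) ^ m * ((numDerangements m : ℤ) : ZMod p)
  | 0 => by simp
  | s + 1 => by
    have IH := E_period m s
    rw [show m + p * (s + 1) = (m + p * s) + p by ring, der_add_p, pow_add, neg_one_pow_p p]
    linear_combination IH

lemma sum_cs_eq (n : ℕ) (hn : 0 < n) (hpn : ¬ p ∣ n) :
    ∑ m ∈ range p, cs p n m
      = (-1 : ZMod p) ^ (n - 1) * ((numDerangements (n - 1) : ℕ) : ZMod p) := by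
  have hp2 := hp.out.two_le
  set n0 := n % p with hn0def
  have hn0pos : 0 < n0 := Nat.pos_of_ne_zero fun h => hpn (Nat.dvd_of_mod_eq_zero h)
  have hn0lt : n0 < p := Nat.mod_lt _ hp.out.pos
  have hcast : ((n : ℕ) : ZMod p) = ((n0 : ℕ) : ZMod p) := (ZMod.natCast_mod n p).symm
  have hzero : ∀ m ∈ range p, m ∉ range n0 → cs p n m = 0 := by
    intro m _ hm
    have hn0m : n0 ≤ m := by simpa using hm
    rw [cs, Finset.prod_eq_zero (Finset.mem_Icc.mpr ⟨hn0pos, hn0m⟩ : n0 ∈ Icc 1 m), mul_zero]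
    rw [hcast, sub_self]
  rw [← Finset.sum_subset (Finset.range_subset_range.mpr hn0lt.le) hzero]
  have hprod : ∀ m, m < n0 → ∏ t ∈ Icc 1 m, ((n : ZMod p) - (t : ZMod p))
      = (((n0 - 1).descFactorial m : ℕ) : ZMod p) := by
    intro m
    induction m with
    | zero => intro _; simp
    | succ m ih =>
      intro hlt
      rw [Finset.prod_Icc_succ_top (by omega : 1 ≤ m + 1), ih (by omega), Nat.descFactorial_succ]
      rw [hcast, ← Nat.cast_sub (by omega : (m + 1 : ℕ) ≤ n0)]
      push_cast
      rw [show n0 - 1 - m = n0 - (m + 1) by omega]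
      ring
  have hsum : ∑ m ∈ range n0, cs p n m
      = ((∑ m ∈ range n0, ((-1 : ℤ)) ^ m * ((n0 - 1).descFactorial m : ℤ) : ℤ) : ZMod p) := by
    push_cast
    refine Finset.sum_congr rfl fun m hm => ?_
    rw [cs, hprod m (Finset.mem_range.mp hm)]
    try push_cast
    try ring
  rw [hsum]
  have hder := der_int (n0 - 1)
  rw [show (n0 - 1) + 1 = n0 by omega] at hder
  rw [hder]
  have hdm := Nat.div_add_mod n p
  have harg : n - 1 = (n0 - 1) + p * (n / p) := by omega
  have hEP := E_period p (n0 - 1) (n / p)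
  rw [harg]
  push_cast at hEP ⊢
  linear_combination -hEP

end Arith
/-- For any prime `p`, positive integers `a` and `n` with `p ∤ n`,
`∑_{k=1}^{p^a-1} B_k/(-n)^k ≡ a·(-1)^(n-1)·D_{n-1} (mod p)` in `ℤ_[p]`. -/
theorem sun_zagier_extension (p : ℕ) [Fact p.Prime] (a n : ℕ) (ha : 0 < a) (hn : 0 < n)
    (hpn : ¬ p ∣ n) :
    (p : ℤ_[p]) ∣
      (∑ k ∈ Finset.Icc 1 (p ^ a - 1), (bell k : ℤ_[p]) * Ring.inverse ((-(n : ℤ_[p])) ^ k)) -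
        (a : ℤ_[p]) * (-1) ^ (n - 1) * (numDerangements (n - 1) : ℤ_[p]) := by
  have hker : ∀ z : ℤ_[p], PadicInt.toZMod z = 0 ↔ (p : ℤ_[p]) ∣ z := by
    intro z
    rw [← RingHom.mem_ker, PadicInt.ker_toZMod, PadicInt.maximalIdeal_eq_span_p,
      Ideal.mem_span_singleton]
  rw [← hker]
  have hnz : PadicInt.toZMod (-(n : ℤ_[p])) = -(n : ZMod p) := by
    rw [map_neg, map_natCast]
  have hunit : IsUnit (-(n : ℤ_[p])) := by
    by_contra h
    have h1 : -(n : ℤ_[p]) ∈ IsLocalRing.maximalIdeal ℤ_[p] :=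
      (IsLocalRing.mem_maximalIdeal _).mpr h
    rw [← PadicInt.ker_toZMod, RingHom.mem_ker, hnz, neg_eq_zero,
      ZMod.natCast_eq_zero_iff] at h1
    exact hpn h1
  have hinv : ∀ k : ℕ, PadicInt.toZMod (Ring.inverse ((-(n : ℤ_[p])) ^ k))
      = ((-(n : ZMod p))⁻¹) ^ k := by
    intro k
    have h1 : ((-(n : ℤ_[p])) ^ k) * Ring.inverse ((-(n : ℤ_[p])) ^ k) = 1 :=
      Ring.mul_inverse_cancel _ (hunit.pow k)
    have h2 := congrArg PadicInt.toZMod h1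
    rw [map_mul, map_one, map_pow, hnz] at h2
    exact (eq_inv_of_mul_eq_one_right h2).trans (inv_pow _ _).symm
  rw [map_sub, map_sum]
  have hsum : ∀ k ∈ Finset.Icc 1 (p ^ a - 1),
      PadicInt.toZMod ((bell k : ℤ_[p]) * Ring.inverse ((-(n : ℤ_[p])) ^ k))
        = (bell k : ZMod p) * ((-(n : ZMod p))⁻¹) ^ k := by
    intro k _
    rw [map_mul, map_natCast, hinv]
  rw [Finset.sum_congr rfl hsum]
  have hrhs : PadicInt.toZMod ((a : ℤ_[p]) * (-1) ^ (n - 1) * (numDerangements (n - 1) : ℤ_[p]))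
      = (a : ZMod p) * (-1) ^ (n - 1) * (numDerangements (n - 1) : ZMod p) := by
    rw [map_mul, map_mul, map_natCast, map_pow, map_neg, map_one, map_natCast]
  rw [hrhs, main_sum p a n hpn, sum_cs_eq p n hn hpn, sub_eq_zero]
  ring
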